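/- For every n ≥ 3, the first resonance variety of the upper McCool group decomposes as R_1 = ⋃_{2 ≤ j < i ≤ n} L_{ij}; that is, a vector a ∈ V satisfies a ∈ R_1 if and only if a lies in one of the linear subspaces L_{ij} with 2 ≤ j < i ≤ n. -/
import Mathlib


/-- Index set for the basis `{u_{ij} : 1 ≤ j < i ≤ n}` (`0`-indexed). -/
abbrev RIdx (n : ℕ) := { p : Fin n × Fin n // p.2 < p.1 }

/-- `V = H¹(PΣₙ⁺;ℂ)`, the `ℂ`-vector space with basis `{u_{ij} : j < i}`. -/
abbrev Vn (n : ℕ) := RIdx n → ℂ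

/-- The basis vector `u_{ij}` (for `j < i`). -/
noncomputable def u (n : ℕ) (i j : Fin n) (h : j < i) : Vn n := Pi.single ⟨(i, j), h⟩ 1

/-- The wedge `a ∧ b`, viewed inside the exterior algebra `Λ(V)`. -/
noncomputable def wedge (n : ℕ) (a b : Vn n) : ExteriorAlgebra ℂ (Vn n) :=
  ExteriorAlgebra.ι ℂ a * ExteriorAlgebra.ι ℂ b

/-- The span `R ⊆ Λ²V` of the degree-2 relations `u_{ij} ∧ (u_{ik} − u_{jk})`
(`k < j < i`) of the cohomology ring of `PΣₙ⁺`. -/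
noncomputable def ResRel (n : ℕ) : Submodule ℂ (ExteriorAlgebra ℂ (Vn n)) :=
  Submodule.span ℂ { w | ∃ (i j k : Fin n) (hkj : k < j) (hji : j < i),
    w = wedge n (u n i j hji) (u n i k (hkj.trans hji) - u n j k hkj) }

/-- The first resonance variety `R₁ = {a ∈ V : ∃ b ∉ ℂ·a, a ∧ b ∈ R}`. -/
noncomputable def R1 (n : ℕ) : Set (Vn n) :=
  { a | ∃ b : Vn n, b ∉ Submodule.span ℂ {a} ∧ wedge n a b ∈ ResRel n }

/-- The linear subspace `L_{ij} ⊆ V` (for `j < i`) cut out by the equations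
`x_{il} + x_{jl} = 0` (`l < j`), `x_{il} = 0` (`j < l < i`), and `x_{st} = 0`
(`t < s`, `s ∉ {i,j}`). -/
noncomputable def L (n : ℕ) (i j : Fin n) (hji : j < i) : Submodule ℂ (Vn n) where
  carrier := { a |
    (∀ (l : Fin n) (h : l < j), a ⟨(i, l), h.trans hji⟩ + a ⟨(j, l), h⟩ = 0) ∧
    (∀ (l : Fin n) (h1 : j < l) (h2 : l < i), a ⟨(i, l), h2⟩ = 0) ∧
    (∀ (s t : Fin n) (h : t < s), s ≠ i → s ≠ j → a ⟨(s, t), h⟩ = 0) }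
  zero_mem' := by
    refine ⟨fun l h => ?_, fun l h1 h2 => ?_, fun s t h hs1 hs2 => ?_⟩ <;> simp
  add_mem' := by
    rintro a b ⟨ha1, ha2, ha3⟩ ⟨hb1, hb2, hb3⟩
    refine ⟨fun l h => ?_, fun l h1 h2 => ?_, fun s t h hs1 hs2 => ?_⟩
    · have h1 := ha1 l h; have h2 := hb1 l h
      simp only [Pi.add_apply]
      linear_combination h1 + h2
    · simp only [Pi.add_apply, ha2 l h1 h2, hb2 l h1 h2, add_zero]
    · simp only [Pi.add_apply, ha3 s t h hs1 hs2, hb3 s t h hs1 hs2, add_zero]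
  smul_mem' := by
    rintro c a ⟨ha1, ha2, ha3⟩
    refine ⟨fun l h => ?_, fun l h1 h2 => ?_, fun s t h hs1 hs2 => ?_⟩
    · have h1 := ha1 l h
      simp only [Pi.smul_apply, smul_eq_mul]
      linear_combination c * h1
    · simp only [Pi.smul_apply, ha2 l h1 h2, smul_zero]
    · simp only [Pi.smul_apply, ha3 s t h hs1 hs2, smul_zero]

section Aux

open ExteriorAlgebra

variable {n : ℕ}

/-- The `{p,q}` minor of the pair of vectors `(a, b)`. -/
def mnr (a b : Vn n) (p q : RIdx n) : ℂ := a p * b q - a q * b p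

/-- The alternating map extracting the `(p,q)` coefficient of a 2-form. -/
noncomputable def coeffA (p q : RIdx n) : (Vn n) [⋀^Fin 2]→ₗ[ℂ] ℂ :=
  (Matrix.detRowAlternating).compLinearMap
    (LinearMap.pi (fun i : Fin 2 => LinearMap.proj (![p, q] i)))

/-- Linear functional on the exterior algebra extracting the `(p,q)` coefficient. -/
noncomputable def phi (p q : RIdx n) : ExteriorAlgebra ℂ (Vn n) →ₗ[ℂ] ℂ :=
  liftAlternating (fun i => match i with
    | 2 => coeffA p q
    | _ => 0)

lemma phi_wedge (p q : RIdx n) (a b : Vn n) :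
    phi p q (wedge n a b) = mnr a b p q := by
  have h2 : wedge n a b = ιMulti ℂ 2 ![a, b] := by
    rw [ιMulti_apply]
    simp [wedge]
  rw [h2, phi, liftAlternating_apply_ιMulti]
  show Matrix.det (Matrix.of fun i j => (![a, b] i) (![p, q] j)) = _
  rw [Matrix.det_fin_two]
  simp [mnr]

lemma u_apply (i j : Fin n) (h : j < i) (p : RIdx n) :
    u n i j h p = if p.1.1.val = i.val ∧ p.1.2.val = j.val then 1 else 0 := by
  obtain ⟨⟨s, t⟩, hts⟩ := p
  rw [u, Pi.single_apply]
  congr 1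
  simp [Subtype.ext_iff, Prod.ext_iff, Fin.ext_iff, eq_comm, and_comm]

lemma u_apply' (i j : Fin n) (h : j < i) (s t : Fin n) (hts : t < s) :
    u n i j h ⟨(s,t),hts⟩ = if s = i ∧ t = j then 1 else 0 := by
  rw [u, Pi.single_apply]
  congr 1
  simp [Subtype.ext_iff, Prod.ext_iff, eq_comm, and_comm]

lemma mnr_gen (i j k : Fin n) (hkj : k < j) (hji : j < i) (p q : RIdx n) :
    mnr (u n i j hji) (u n i k (hkj.trans hji) - u n j k hkj) p q =
      (if p.1.1.val = i.val ∧ p.1.2.val = j.val then 1 else 0) *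
        ((if q.1.1.val = i.val ∧ q.1.2.val = k.val then 1 else 0) -
         (if q.1.1.val = j.val ∧ q.1.2.val = k.val then 1 else 0)) -
      (if q.1.1.val = i.val ∧ q.1.2.val = j.val then 1 else 0) *
        ((if p.1.1.val = i.val ∧ p.1.2.val = k.val then 1 else 0) -
         (if p.1.1.val = j.val ∧ p.1.2.val = k.val then 1 else 0)) := by
  simp only [mnr, Pi.sub_apply, u_apply]

set_option maxHeartbeats 1000000 in
lemma minor_nonallowed {a b : Vn n} (hw : wedge n a b ∈ ResRel n) (p q : RIdx n)
    (h1 : p.1.1.val ≠ q.1.1.val) (h2 : p.1.2.val ≠ q.1.1.val) (h3 : q.1.2.val ≠ p.1.1.val) :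
    mnr a b p q = 0 := by
  have hker : ResRel n ≤ LinearMap.ker (phi p q) := by
    rw [ResRel, Submodule.span_le]
    rintro w ⟨i, j, k, hkj, hji, rfl⟩
    have hkj' : k.val < j.val := hkj
    have hji' : j.val < i.val := hji
    simp only [SetLike.mem_coe, LinearMap.mem_ker, phi_wedge, mnr_gen]
    split_ifs <;> first | (exfalso; omega) | norm_num
  have := hker hw
  rw [LinearMap.mem_ker, phi_wedge] at this
  exact this

set_option maxHeartbeats 2000000 in
lemma minor_triple {a b : Vn n} (hw : wedge n a b ∈ ResRel n) (I J K : Fin n)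
    (hKJ : K < J) (hJI : J < I) :
    mnr a b ⟨(I,J),hJI⟩ ⟨(I,K),hKJ.trans hJI⟩ + mnr a b ⟨(I,J),hJI⟩ ⟨(J,K),hKJ⟩ = 0 := by
  have hker : ResRel n ≤ LinearMap.ker
      (phi ⟨(I,J),hJI⟩ ⟨(I,K),hKJ.trans hJI⟩ + phi ⟨(I,J),hJI⟩ ⟨(J,K),hKJ⟩) := by
    rw [ResRel, Submodule.span_le]
    rintro w ⟨i, j, k, hkj, hji, rfl⟩
    have hkj' : k.val < j.val := hkj
    have hji' : j.val < i.val := hji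
    have hKJ' : K.val < J.val := hKJ
    have hJI' : J.val < I.val := hJI
    simp only [SetLike.mem_coe, LinearMap.mem_ker, LinearMap.add_apply, phi_wedge, mnr_gen]
    split_ifs <;> first | (exfalso; omega) | norm_num
  have := hker hw
  rw [LinearMap.mem_ker, LinearMap.add_apply, phi_wedge, phi_wedge] at this
  exact this

lemma vanish {x y p1 q1 p2 q2 : ℂ} (hD : p1*q2 - q1*p2 ≠ 0)
    (h1 : p1*y - q1*x = 0) (h2 : p2*y - q2*x = 0) : x = 0 ∧ y = 0 := by
  have hx : x * (p1*q2 - q1*p2) = 0 := by linear_combination p2*h1 - p1*h2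
  have hy : y * (p1*q2 - q1*p2) = 0 := by linear_combination q2*h1 - q1*h2
  constructor
  · rcases mul_eq_zero.mp hx with h | h
    · exact h
    · exact absurd h hD
  · rcases mul_eq_zero.mp hy with h | h
    · exact h
    · exact absurd h hD

end Aux
section Main

variable {n : ℕ}

lemma fin_ne_of_val_ne' {x y : Fin n} (h : (x:ℕ) ≠ (y:ℕ)) : x ≠ y :=
  fun e => h (congrArg Fin.val e)

lemma main_step {a b : Vn n}
    (H1 : ∀ (s t s' t' : Fin n) (h : t < s) (h' : t' < s'),
      s ≠ s' → t ≠ s' → t' ≠ s → mnr a b ⟨(s,t),h⟩ ⟨(s',t'),h'⟩ = 0)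
    (H2 : ∀ (i j k : Fin n) (hkj : k < j) (hji : j < i),
      mnr a b ⟨(i,j),hji⟩ ⟨(i,k),hkj.trans hji⟩ + mnr a b ⟨(i,j),hji⟩ ⟨(j,k),hkj⟩ = 0)
    (I J K : Fin n) (hKJ : K < J) (hJI : J < I)
    (hD : mnr a b ⟨(I,J),hJI⟩ ⟨(I,K),hKJ.trans hJI⟩ ≠ 0) :
    a ∈ L n I J hJI := by
  have hKI : K < I := hKJ.trans hJI
  have hKJ' : (K:ℕ) < J := hKJ
  have hJI' : (J:ℕ) < I := hJI
  -- the basic nondegenerate determinant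
  have hD2 : a ⟨(I,J),hJI⟩ * b ⟨(I,K),hKI⟩ - b ⟨(I,J),hJI⟩ * a ⟨(I,K),hKI⟩ ≠ 0 := by
    intro h
    apply hD
    simp only [mnr]
    linear_combination h
  -- v_{JK} = -v_{IK}
  have hIKJK := H1 I K J K hKI hKJ (fin_ne_of_val_ne' (by omega))
    (fin_ne_of_val_ne' (by omega)) (fin_ne_of_val_ne' (by omega))
  have t0 := H2 I J K hKJ hJI
  simp only [mnr] at hIKJK t0
  obtain ⟨e1, e2⟩ : (a ⟨(I,K),hKI⟩ + a ⟨(J,K),hKJ⟩ = 0) ∧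
      (b ⟨(I,K),hKI⟩ + b ⟨(J,K),hKJ⟩ = 0) :=
    vanish hD2 (by linear_combination t0) (by linear_combination hIKJK)
  -- Claim A : rows above I are parallel to v_{IJ}
  have claimA : ∀ (s : Fin n) (hIs : I < s),
      mnr a b ⟨(s,I),hIs⟩ ⟨(I,J),hJI⟩ = 0 := by
    intro s hIs
    have hIs' : (I:ℕ) < s := hIs
    by_contra hX
    have t1 := H2 s I J hJI hIs
    have hsJIJ := H1 s J I J (hJI.trans hIs) hJI (fin_ne_of_val_ne' (by omega))
      (fin_ne_of_val_ne' (by omega)) (fin_ne_of_val_ne' (by omega))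
    have hsJIK := H1 s J I K (hJI.trans hIs) hKI (fin_ne_of_val_ne' (by omega))
      (fin_ne_of_val_ne' (by omega)) (fin_ne_of_val_ne' (by omega))
    simp only [mnr] at t1 hsJIJ hsJIK
    obtain ⟨ex, ey⟩ : (a ⟨(s,J),hJI.trans hIs⟩ = 0) ∧ (b ⟨(s,J),hJI.trans hIs⟩ = 0) :=
      vanish hD2 (by linear_combination -hsJIJ) (by linear_combination -hsJIK)
    apply hX
    simp only [mnr]
    linear_combination t1 - a ⟨(s,I),hIs⟩ * ey + b ⟨(s,I),hIs⟩ * ex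
  -- Claim L3 : rows other than I, J vanish
  have claimL3 : ∀ (s t : Fin n) (hts : t < s), s ≠ I → s ≠ J →
      a ⟨(s,t),hts⟩ = 0 ∧ b ⟨(s,t),hts⟩ = 0 := by
    intro s t hts hsI hsJ
    have hsI' : (s:ℕ) ≠ I := fun h => hsI (Fin.ext h)
    have hsJ' : (s:ℕ) ≠ J := fun h => hsJ (Fin.ext h)
    have hts' : (t:ℕ) < s := hts
    have par1 : a ⟨(I,J),hJI⟩ * b ⟨(s,t),hts⟩ - b ⟨(I,J),hJI⟩ * a ⟨(s,t),hts⟩ = 0 := by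
      by_cases ht : t = I
      · have ht2 : I = t := ht.symm
        subst ht2
        have := claimA s hts
        simp only [mnr] at this
        linear_combination -this
      · have ht' : (t:ℕ) ≠ I := fun h => ht (Fin.ext h)
        have h0 := H1 I J s t hJI hts (fin_ne_of_val_ne' (by omega))
          (fin_ne_of_val_ne' (by omega)) (fin_ne_of_val_ne' (by omega))
        simp only [mnr] at h0
        linear_combination h0
    have par2 : a ⟨(I,K),hKI⟩ * b ⟨(s,t),hts⟩ - b ⟨(I,K),hKI⟩ * a ⟨(s,t),hts⟩ = 0 := by
      by_cases ht : t = I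
      · have ht2 : I = t := ht.symm
        subst ht2
        have hIs' : (I:ℕ) < s := hts
        have h0 := H1 s I J K hts hKJ (fin_ne_of_val_ne' (by omega))
          (fin_ne_of_val_ne' (by omega)) (fin_ne_of_val_ne' (by omega))
        simp only [mnr] at h0
        linear_combination h0 + b ⟨(s,I),hts⟩ * e1 - a ⟨(s,I),hts⟩ * e2
      · by_cases hsK : s = K
        · have hsK2 : K = s := hsK.symm
          subst hsK2
          have ht2' : (t:ℕ) < K := hts
          have h3 := H1 I t J K (hts.trans hKI) hKJ (fin_ne_of_val_ne' (by omega))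
            (fin_ne_of_val_ne' (by omega)) (fin_ne_of_val_ne' (by omega))
          have t4 := H2 I K t hts hKI
          simp only [mnr] at h3 t4
          linear_combination t4 - h3 - b ⟨(I,t),hts.trans hKI⟩ * e1
            + a ⟨(I,t),hts.trans hKI⟩ * e2
        · have hsK' : (s:ℕ) ≠ K := fun h => hsK (Fin.ext h)
          have ht' : (t:ℕ) ≠ I := fun h => ht (Fin.ext h)
          have h0 := H1 I K s t hKI hts (fin_ne_of_val_ne' (by omega))
            (fin_ne_of_val_ne' (by omega)) (fin_ne_of_val_ne' (by omega))
          simp only [mnr] at h0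
          linear_combination h0
    exact vanish hD2 par1 par2
  -- Claim L2 : entries a_{I,l} with J < l < I vanish
  have claimL2 : ∀ (l : Fin n) (h1 : J < l) (h2 : l < I), a ⟨(I,l),h2⟩ = 0 := by
    intro l h1 h2
    have h1' : (J:ℕ) < l := h1
    have h2' : (l:ℕ) < I := h2
    have hA := H1 I l J K h2 hKJ (fin_ne_of_val_ne' (by omega))
      (fin_ne_of_val_ne' (by omega)) (fin_ne_of_val_ne' (by omega))
    simp only [mnr] at hA
    have par2 : a ⟨(I,K),hKI⟩ * b ⟨(I,l),h2⟩ - b ⟨(I,K),hKI⟩ * a ⟨(I,l),h2⟩ = 0 := by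
      linear_combination hA + b ⟨(I,l),h2⟩ * e1 - a ⟨(I,l),h2⟩ * e2
    obtain ⟨hx, hy⟩ := claimL3 l J h1 (fin_ne_of_val_ne' (by omega))
      (fin_ne_of_val_ne' (by omega))
    have t5 := H2 I l J h1 h2
    simp only [mnr] at t5
    have par1 : a ⟨(I,J),hJI⟩ * b ⟨(I,l),h2⟩ - b ⟨(I,J),hJI⟩ * a ⟨(I,l),h2⟩ = 0 := by
      linear_combination -t5 + a ⟨(I,l),h2⟩ * hy - b ⟨(I,l),h2⟩ * hx
    exact (vanish hD2 par1 par2).1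
  -- Claim L1 : for l < J, a_{I,l} + a_{J,l} = 0
  have claimL1 : ∀ (l : Fin n) (h : l < J),
      a ⟨(I,l),h.trans hJI⟩ + a ⟨(J,l),h⟩ = 0 := by
    intro l h
    have h' : (l:ℕ) < J := h
    have eA := H1 I l J K (h.trans hJI) hKJ (fin_ne_of_val_ne' (by omega))
      (fin_ne_of_val_ne' (by omega)) (fin_ne_of_val_ne' (by omega))
    have eB := H1 J l I K h hKI (fin_ne_of_val_ne' (by omega))
      (fin_ne_of_val_ne' (by omega)) (fin_ne_of_val_ne' (by omega))
    have t6 := H2 I J l h hJI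
    simp only [mnr] at eA eB t6
    have g1 : a ⟨(I,J),hJI⟩ * (b ⟨(I,l),h.trans hJI⟩ + b ⟨(J,l),h⟩)
        - b ⟨(I,J),hJI⟩ * (a ⟨(I,l),h.trans hJI⟩ + a ⟨(J,l),h⟩) = 0 := by
      linear_combination t6
    have g2 : a ⟨(I,K),hKI⟩ * (b ⟨(I,l),h.trans hJI⟩ + b ⟨(J,l),h⟩)
        - b ⟨(I,K),hKI⟩ * (a ⟨(I,l),h.trans hJI⟩ + a ⟨(J,l),h⟩) = 0 := by
      linear_combination eA + b ⟨(I,l),h.trans hJI⟩ * e1 - a ⟨(I,l),h.trans hJI⟩ * e2 - eB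
    exact (vanish hD2 g1 g2).1
  exact ⟨claimL1, claimL2, fun s t h hs1 hs2 => (claimL3 s t h hs1 hs2).1⟩

end Main
/-- For `n ≥ 3`, the first resonance variety of the upper McCool group `PΣₙ⁺`
decomposes as `R₁ = ⋃_{2 ≤ j < i ≤ n} L_{ij}` (in `0`-indexed terms, `1 ≤ j`,
i.e. `j ≠ 0`). -/
theorem R1_eq_union_L (n : ℕ) (hn : 3 ≤ n) :
    ∀ a : Vn n, a ∈ R1 n ↔
      ∃ (i j : Fin n) (hji : j < i), 1 ≤ j.val ∧ a ∈ L n i j hji := by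
  intro a
  constructor
  · rintro ⟨b, hb, hw⟩
    by_cases ha : a = 0
    · subst ha
      refine ⟨⟨2, by omega⟩, ⟨1, by omega⟩, by rw [Fin.mk_lt_mk]; omega, Nat.le_refl 1, ?_⟩
      exact (L n _ _ _).zero_mem
    · have H1 : ∀ (s t s' t' : Fin n) (h : t < s) (h' : t' < s'),
          s ≠ s' → t ≠ s' → t' ≠ s → mnr a b ⟨(s,t),h⟩ ⟨(s',t'),h'⟩ = 0 := by
        intro s t s' t' h h' e1 e2 e3
        exact minor_nonallowed hw _ _ (fun hh => e1 (Fin.ext hh))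
          (fun hh => e2 (Fin.ext hh)) (fun hh => e3 (Fin.ext hh))
      have H2 : ∀ (i j k : Fin n) (hkj : k < j) (hji : j < i),
          mnr a b ⟨(i,j),hji⟩ ⟨(i,k),hkj.trans hji⟩ + mnr a b ⟨(i,j),hji⟩ ⟨(j,k),hkj⟩ = 0 :=
        fun i j k hkj hji => minor_triple hw i j k hkj hji
      have hex : ∃ p q, mnr a b p q ≠ 0 := by
        by_contra hno
        push_neg at hno
        apply hb
        have hap : ∃ p, a p ≠ 0 := by
          by_contra h
          push_neg at h
          exact ha (funext fun p => h p)
        obtain ⟨p0, hp0⟩ := hap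
        rw [Submodule.mem_span_singleton]
        refine ⟨b p0 / a p0, funext fun q => ?_⟩
        have h0 := hno p0 q
        simp only [mnr] at h0
        rw [Pi.smul_apply, smul_eq_mul, div_mul_eq_mul_div, div_eq_iff hp0]
        linear_combination -h0
      obtain ⟨p, q, hm⟩ := hex
      obtain ⟨⟨p1, p2⟩, hp⟩ := p
      obtain ⟨⟨q1, q2⟩, hq⟩ := q
      have hp' : (p2:ℕ) < p1 := hp
      have hq' : (q2:ℕ) < q1 := hq
      by_cases e1 : p1 = q1
      · subst e1
        have hne : p2 ≠ q2 := by
          rintro rfl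
          exact hm (sub_self _)
        rcases lt_or_gt_of_ne hne with hlt | hgt
        · have hlt' : (p2:ℕ) < q2 := hlt
          have hD : mnr a b ⟨(p1,q2),hq⟩ ⟨(p1,p2),hp⟩ ≠ 0 := by
            intro h
            apply hm
            simp only [mnr] at h ⊢
            linear_combination -h
          exact ⟨p1, q2, hq, by omega, main_step H1 H2 p1 q2 p2 hlt hq hD⟩
        · have hgt' : (q2:ℕ) < p2 := hgt
          exact ⟨p1, p2, hp, by omega, main_step H1 H2 p1 p2 q2 hgt hp hm⟩
      · by_cases e2 : q1 = p2
        · have e2' : p2 = q1 := e2.symm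
          subst e2'
          have t := H2 p1 p2 q2 hq hp
          have hD : mnr a b ⟨(p1,p2),hp⟩ ⟨(p1,q2),hq.trans hp⟩ ≠ 0 := by
            intro h
            rw [h, zero_add] at t
            exact hm t
          exact ⟨p1, p2, hp, by omega, main_step H1 H2 p1 p2 q2 hq hp hD⟩
        · by_cases e3 : p1 = q2
          · subst e3
            have t := H2 q1 p1 p2 hp hq
            have hD : mnr a b ⟨(q1,p1),hq⟩ ⟨(q1,p2),hp.trans hq⟩ ≠ 0 := by
              intro h
              rw [h, zero_add] at t
              apply hm
              simp only [mnr] at t ⊢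
              linear_combination -t
            exact ⟨q1, p1, hq, by omega, main_step H1 H2 q1 p1 p2 hp hq hD⟩
          · exact absurd (H1 p1 p2 q1 q2 hp hq e1 (fun h => e2 h.symm) (fun h => e3 h.symm)) hm
  · rintro ⟨I, J, hJI, hJ1, haL⟩
    obtain ⟨hL1, hL2, hL3⟩ := haL
    have hJI' : (J:ℕ) < I := hJI
    by_cases hA : ∀ (l : Fin n) (h : l < J), a ⟨(I,l), h.trans hJI⟩ = 0
    · -- `a` is a multiple of `u_{IJ}`; take `b = u_{I0} - u_{J0}`
      have h0n : 0 < n := by omega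
      set z : Fin n := ⟨0, h0n⟩ with hzdef
      have hz : z < J := by
        rw [Fin.lt_def]
        show 0 < J.val
        omega
      have hrep : a = a ⟨(I,J),hJI⟩ • u n I J hJI := by
        funext p
        obtain ⟨⟨s,t⟩, hts⟩ := p
        rw [Pi.smul_apply, u_apply', smul_eq_mul]
        rcases eq_or_ne s I with rfl | hsI
        · rcases eq_or_ne t J with rfl | htJ
          · rw [if_pos ⟨rfl, rfl⟩, mul_one]
          · rw [if_neg (fun hh => htJ hh.2), mul_zero]
            rcases lt_or_gt_of_ne htJ with hlt | hgt
            · exact hA t hlt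
            · exact hL2 t hgt hts
        · rw [if_neg (fun hh => hsI hh.1), mul_zero]
          rcases eq_or_ne s J with rfl | hsJ
          · have := hL1 t hts
            have h2 := hA t hts
            linear_combination this - h2
          · exact hL3 s t hts hsI hsJ
      refine ⟨u n I z (hz.trans hJI) - u n J z hz, ?_, ?_⟩
      · rw [Submodule.mem_span_singleton]
        rintro ⟨c, hc⟩
        have hthis := congrFun hc ⟨(J,z),hz⟩
        rw [Pi.smul_apply, Pi.sub_apply, u_apply', u_apply', smul_eq_mul,
          if_neg (fun hh => (ne_of_lt hJI) hh.1), if_pos ⟨rfl, rfl⟩] at hthis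
        have hz0 : a ⟨(J,z),hz⟩ = 0 := by
          have h1 := hL1 z hz
          have h2 := hA z hz
          linear_combination h1 - h2
        rw [hz0, mul_zero] at hthis
        norm_num at hthis
      · rw [wedge, hrep, map_smul, smul_mul_assoc]
        exact Submodule.smul_mem _ _ (Submodule.subset_span ⟨I, J, z, hz, hJI, rfl⟩)
    · push_neg at hA
      obtain ⟨l0, hl0, hal0⟩ := hA
      refine ⟨u n I J hJI, ?_, ?_⟩
      · rw [Submodule.mem_span_singleton]
        rintro ⟨c, hc⟩
        have h1 := congrFun hc ⟨(I,l0), hl0.trans hJI⟩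
        have h2 := congrFun hc ⟨(I,J), hJI⟩
        rw [Pi.smul_apply, smul_eq_mul, u_apply',
          if_neg (fun hh => (ne_of_lt hl0) hh.2)] at h1
        rw [Pi.smul_apply, smul_eq_mul, u_apply', if_pos ⟨rfl, rfl⟩] at h2
        have hc0 : c = 0 := by
          rcases mul_eq_zero.mp h1 with h | h
          · exact h
          · exact absurd h hal0
        rw [hc0, zero_mul] at h2
        norm_num at h2
      · have hrep : a = a ⟨(I,J),hJI⟩ • u n I J hJI +
            ∑ l : Fin n, (if h : l < J then
              a ⟨(I,l), h.trans hJI⟩ • (u n I l (h.trans hJI) - u n J l h) else 0) := by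
          funext p
          obtain ⟨⟨s,t⟩, hts⟩ := p
          rw [Pi.add_apply, Finset.sum_apply]
          have hsum : ∀ l ∈ Finset.univ, l ≠ t →
              (if h : l < J then
                a ⟨(I,l), h.trans hJI⟩ • (u n I l (h.trans hJI) - u n J l h) else 0)
                ⟨(s,t),hts⟩ = 0 := by
            intro l _ hlt
            by_cases h : l < J
            · rw [dif_pos h, Pi.smul_apply, Pi.sub_apply, u_apply', u_apply',
                if_neg (fun hh => hlt hh.2.symm), if_neg (fun hh => hlt hh.2.symm)]
              simp
            · rw [dif_neg h, Pi.zero_apply]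
          rw [Finset.sum_eq_single_of_mem t (Finset.mem_univ t) hsum]
          rw [Pi.smul_apply, u_apply', smul_eq_mul]
          rcases eq_or_ne s I with rfl | hsI
          · rcases eq_or_ne t J with rfl | htJ
            · rw [if_pos ⟨rfl, rfl⟩, mul_one, dif_neg (lt_irrefl _), Pi.zero_apply, add_zero]
            · rw [if_neg (fun hh => htJ hh.2), mul_zero, zero_add]
              by_cases h : t < J
              · rw [dif_pos h, Pi.smul_apply, Pi.sub_apply, u_apply', u_apply',
                  if_pos ⟨rfl, rfl⟩, if_neg (fun hh => (ne_of_lt hJI) hh.1.symm), smul_eq_mul]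
                ring_nf
                try rfl
              · rw [dif_neg h]
                have hJt : J < t := lt_of_le_of_ne (not_lt.mp h) (Ne.symm htJ)
                exact hL2 t hJt hts
          · rw [if_neg (fun hh => hsI hh.1), mul_zero, zero_add]
            rcases eq_or_ne s J with rfl | hsJ
            · rw [dif_pos hts, Pi.smul_apply, Pi.sub_apply, u_apply', u_apply',
                if_neg (fun hh => (ne_of_lt hJI) hh.1), if_pos ⟨rfl, rfl⟩, smul_eq_mul]
              have := hL1 t hts
              linear_combination this
            · by_cases h : t < J
              · rw [dif_pos h, Pi.smul_apply, Pi.sub_apply, u_apply', u_apply',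
                  if_neg (fun hh => hsI hh.1), if_neg (fun hh => hsJ hh.1), smul_eq_mul]
                ring_nf
                exact hL3 s t hts hsI hsJ
              · rw [dif_neg h]
                exact hL3 s t hts hsI hsJ
        rw [wedge, hrep, map_add, map_smul, map_sum, add_mul, smul_mul_assoc,
          ExteriorAlgebra.ι_sq_zero, smul_zero, zero_add, Finset.sum_mul]
        apply Submodule.sum_mem
        intro l _
        by_cases h : l < J
        · rw [dif_pos h, map_smul, smul_mul_assoc]
          apply Submodule.smul_mem
          have hswap : ExteriorAlgebra.ι ℂ (u n I l (h.trans hJI) - u n J l h) *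
              ExteriorAlgebra.ι ℂ (u n I J hJI) =
              - (ExteriorAlgebra.ι ℂ (u n I J hJI) *
                ExteriorAlgebra.ι ℂ (u n I l (h.trans hJI) - u n J l h)) := by
            have hs := ExteriorAlgebra.ι_add_mul_swap (R := ℂ)
              (u n I l (h.trans hJI) - u n J l h) (u n I J hJI)
            exact eq_neg_of_add_eq_zero_left hs
          rw [hswap]
          exact Submodule.neg_mem _ (Submodule.subset_span ⟨I, J, l, h, hJI, rfl⟩)
        · rw [dif_neg h, map_zero, zero_mul]
          exact Submodule.zero_mem _
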